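/- Let g be a Lie algebra, m ⊆ g an ad-nilpotent subalgebra (every a ∈ m acts nilpotently on g via ad), and χ a character of m. Then the shifted elements a - χ(a), for a ∈ m, act locally nilpotently on Q_χ = U(g)/U(g)m_χ by left multiplication. -/

import Mathlib

open UniversalEnvelopingAlgebra

/-- Let `m` be an ad-nilpotent Lie subalgebra of `g` with character `χ`, and let
`Q_χ = U(g)/U(g)·m_χ` be the generalized Gelfand–Graev module. Then each shifted element
`a - χ(a)`, `a ∈ m`, acts locally nilpotently on `Q_χ` by left multiplication. -/
theorem stmt_19 {K L : Type*} [Field K] [CharZero K] [LieRing L] [LieAlgebra K L]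
    (m : LieSubalgebra K L)
    (hnil : ∀ a : m, IsNilpotent (LieAlgebra.ad K L (a : L)))
    (χ : m →ₗ[K] K) (hχ : ∀ a b : m, χ ⁅a, b⁆ = 0)
    (I : Submodule (UniversalEnvelopingAlgebra K L) (UniversalEnvelopingAlgebra K L))
    (hI : I = Submodule.span (UniversalEnvelopingAlgebra K L)
      (Set.range fun a : m =>
        (ι K (a : L) : UniversalEnvelopingAlgebra K L)
          - algebraMap K (UniversalEnvelopingAlgebra K L) (χ a)))
    (v : UniversalEnvelopingAlgebra K L ⧸ I) (a : m) :
    ∃ N : ℕ,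
      ((ι K (a : L) - algebraMap K (UniversalEnvelopingAlgebra K L) (χ a)) ^ N) • v = 0 := by
  classical
  obtain ⟨u, rfl⟩ := Submodule.Quotient.mk_surjective I v
  set c : UniversalEnvelopingAlgebra K L := ι K (a : L) with hc
  set x : UniversalEnvelopingAlgebra K L :=
    c - algebraMap K (UniversalEnvelopingAlgebra K L) (χ a) with hx
  set D : Module.End K (UniversalEnvelopingAlgebra K L) :=
    LinearMap.mulLeft K c - LinearMap.mulRight K c with hD
  have hDapp : ∀ w, D w = c * w - w * c := by
    intro w
    simp [hD, LinearMap.sub_apply, LinearMap.mulLeft_apply, LinearMap.mulRight_apply]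
  -- product rule
  have hmulrule : ∀ w₁ w₂, D (w₁ * w₂) = D w₁ * w₂ + w₁ * D w₂ := by
    intro w₁ w₂
    simp only [hDapp]
    noncomm_ring
  -- order additivity for products
  have hmul : ∀ n : ℕ, ∀ p q : ℕ, ∀ w₁ w₂ : UniversalEnvelopingAlgebra K L, p + q = n →
      (D ^ p) w₁ = 0 → (D ^ q) w₂ = 0 → (D ^ n) (w₁ * w₂) = 0 := by
    intro n
    induction n with
    | zero =>
      intro p q w₁ w₂ hpq h1 h2
      have hp : p = 0 := by omega
      subst hp
      simp only [pow_zero, Module.End.one_apply] at h1 ⊢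
      rw [h1, zero_mul]
    | succ n ih =>
      intro p q w₁ w₂ hpq h1 h2
      match p, q with
      | 0, q =>
        simp only [pow_zero, Module.End.one_apply] at h1
        rw [h1, zero_mul, map_zero]
      | p + 1, 0 =>
        simp only [pow_zero, Module.End.one_apply] at h2
        rw [h2, mul_zero, map_zero]
      | p + 1, q + 1 =>
        have hs : (D ^ (n + 1)) (w₁ * w₂) = (D ^ n) (D (w₁ * w₂)) := by
          rw [pow_succ, Module.End.mul_apply]
        rw [hs, hmulrule, map_add]
        have e1 : (D ^ n) (D w₁ * w₂) = 0 := by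
          refine ih p (q + 1) (D w₁) w₂ (by omega) ?_ h2
          rw [← Module.End.mul_apply, ← pow_succ]
          exact h1
        have e2 : (D ^ n) (w₁ * D w₂) = 0 := by
          refine ih (p + 1) q w₁ (D w₂) (by omega) h1 ?_
          rw [← Module.End.mul_apply, ← pow_succ]
          exact h2
        rw [e1, e2, add_zero]
  -- action on generators
  have hgen : ∀ n : ℕ, ∀ y : L,
      (D ^ n) (ι K y : UniversalEnvelopingAlgebra K L)
        = ι K (((LieAlgebra.ad K L (a : L)) ^ n) y) := by
    intro n
    induction n with
    | zero => intro y; simp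
    | succ n ih =>
      intro y
      rw [pow_succ', Module.End.mul_apply, pow_succ', Module.End.mul_apply, ih]
      have hz : ∀ z : L, D (ι K z : UniversalEnvelopingAlgebra K L) = ι K ⁅(a : L), z⁆ := by
        intro z
        letI : LieRing (UniversalEnvelopingAlgebra K L) := LieRing.ofAssociativeRing
        rw [hDapp, hc, LieHom.map_lie, Ring.lie_def]
      rw [hz, LieAlgebra.ad_apply]
  -- local nilpotency of D on the whole algebra
  have hln : ∀ w : UniversalEnvelopingAlgebra K L, ∃ n, (D ^ n) w = 0 := by
    obtain ⟨M, hM⟩ := hnil a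
    intro w
    obtain ⟨t, rfl⟩ : ∃ t, mkAlgHom K L t = w := RingCon.mkₐ_surjective (α := K) (ringCon K L) w
    induction t using TensorAlgebra.induction with
    | algebraMap r =>
      refine ⟨1, ?_⟩
      rw [pow_one, AlgHom.commutes]
      show D (algebraMap K (UniversalEnvelopingAlgebra K L) r) = 0
      rw [hDapp, Algebra.commutes, sub_self]
    | ι y =>
      refine ⟨M, ?_⟩
      have : (mkAlgHom K L) (TensorAlgebra.ι K y)
          = (ι K y : UniversalEnvelopingAlgebra K L) := by
        rw [ι_apply]
      rw [this, hgen, hM]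
      simp
    | mul t₁ t₂ h1 h2 =>
      obtain ⟨p, hp⟩ := h1
      obtain ⟨q, hq⟩ := h2
      exact ⟨p + q, by rw [map_mul]; exact hmul (p + q) p q _ _ rfl hp hq⟩
    | add t₁ t₂ h1 h2 =>
      obtain ⟨p, hp⟩ := h1
      obtain ⟨q, hq⟩ := h2
      refine ⟨p + q, ?_⟩
      rw [map_add, map_add]
      have e1 : (D ^ (p + q)) ((mkAlgHom K L) t₁) = 0 := by
        rw [add_comm, pow_add, Module.End.mul_apply, hp, map_zero]
      have e2 : (D ^ (p + q)) ((mkAlgHom K L) t₂) = 0 := by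
        rw [pow_add, Module.End.mul_apply, hq, map_zero]
      rw [e1, e2, add_zero]
  obtain ⟨N, hN⟩ := hln u
  refine ⟨N, ?_⟩
  -- the shifted inner derivation agrees with D
  have hx_sub : LinearMap.mulLeft K x - LinearMap.mulRight K x = D := by
    ext w
    simp only [LinearMap.sub_apply, LinearMap.mulLeft_apply, LinearMap.mulRight_apply, hDapp, hx]
    have hcw : algebraMap K (UniversalEnvelopingAlgebra K L) (χ a) * w
        = w * algebraMap K (UniversalEnvelopingAlgebra K L) (χ a) := Algebra.commutes _ _
    rw [sub_mul, mul_sub, hcw]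
    abel
  have hcomm : Commute D (LinearMap.mulRight K x) := by
    rw [← hx_sub]
    exact (LinearMap.commute_mulLeft_right x x).sub_left (Commute.refl _)
  have hsplit : LinearMap.mulLeft K x = LinearMap.mulRight K x + D := by
    rw [← hx_sub]; abel
  -- binomial expansion
  have hbin : x ^ N * u = ∑ k ∈ Finset.range (N + 1),
      (N.choose k) • ((D ^ (N - k)) u * x ^ k) := by
    have h1 : x ^ N * u = (LinearMap.mulLeft K (x ^ N)) u := by
      rw [LinearMap.mulLeft_apply]
    rw [h1, ← LinearMap.pow_mulLeft, hsplit, hcomm.symm.add_pow]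
    rw [LinearMap.sum_apply]
    refine Finset.sum_congr rfl fun k _ => ?_
    rw [Module.End.mul_apply, Module.End.mul_apply, Module.End.natCast_apply,
      map_nsmul, map_nsmul, LinearMap.pow_mulRight, LinearMap.mulRight_apply]
  -- x ^ N * u lies in I
  have hxI : x ∈ I := by
    rw [hI]
    exact Submodule.subset_span ⟨a, rfl⟩
  have hmem : x ^ N * u ∈ I := by
    rw [hbin]
    refine Submodule.sum_mem I fun k _ => ?_
    match k with
    | 0 =>
      rw [Nat.sub_zero, hN, zero_mul, smul_zero]
      exact Submodule.zero_mem I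
    | j + 1 =>
      refine nsmul_mem ?_ _
      rw [pow_succ, ← mul_assoc]
      have : (D ^ (N - (j + 1))) u * x ^ j * x
          = ((D ^ (N - (j + 1))) u * x ^ j) • x := by rw [smul_eq_mul]
      rw [this]
      exact Submodule.smul_mem I _ hxI
  rw [← Submodule.Quotient.mk_smul, smul_eq_mul]
  exact (Submodule.Quotient.mk_eq_zero I).mpr hmem
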